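/- Let λ > 0 and let (p_k)_{k≥1} be a sequence of real polynomials such that p_k has degree k and its leading coefficient α_k satisfies |α_k| ≥ λ^k for all k. Then the set Y = {τ ∈ ℝ : the sequence (p_k(τ))_{k≥1} is bounded} has finite Lebesgue measure; in fact its Lebesgue measure is at most 8/λ. -/

import Mathlib

open Polynomial Finset MeasureTheory

-- k^k ≤ 3^k * k!
lemma pow_self_le_three_pow_factorial (k : ℕ) : ((k:ℝ))^k ≤ 3^k * (k.factorial : ℝ) := by
  induction k with
  | zero => norm_num
  | succ k ih =>
    push_cast
    rcases Nat.eq_zero_or_pos k with rfl | hk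
    · norm_num
    · have hk0 : (0:ℝ) < (k:ℝ) := by exact_mod_cast hk
      have hsplit : ((k:ℝ)+1) = (k:ℝ) * (1 + 1/(k:ℝ)) := by field_simp
      have hexp : (1 + 1/(k:ℝ))^k ≤ 3 := by
        have h1 : (1 + 1/(k:ℝ)) ≤ Real.exp (1/(k:ℝ)) := by
          have := Real.add_one_le_exp (1/(k:ℝ)); linarith
        have h2 : (1 + 1/(k:ℝ))^k ≤ Real.exp (1/(k:ℝ))^k :=
          pow_le_pow_left₀ (by positivity) h1 k
        have h3 : Real.exp (1/(k:ℝ))^k = Real.exp ((k:ℝ) * (1/(k:ℝ))) :=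
          (Real.exp_nat_mul _ k).symm
        have h4 : (k:ℝ) * (1/(k:ℝ)) = 1 := by field_simp
        rw [h3, h4] at h2
        have := Real.exp_one_lt_d9
        linarith
      have key : ((k:ℝ)+1)^k ≤ (k:ℝ)^k * 3 := by
        calc ((k:ℝ)+1)^k = (k:ℝ)^k * (1 + 1/(k:ℝ))^k := by rw [hsplit, mul_pow]
          _ ≤ (k:ℝ)^k * 3 := by
              apply mul_le_mul_of_nonneg_left hexp (by positivity)
      have hfact : ((k+1).factorial : ℝ) = ((k:ℝ)+1) * (k.factorial : ℝ) := by
        rw [Nat.factorial_succ]; push_cast; ring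
      calc ((k:ℝ)+1)^(k+1) = ((k:ℝ)+1)^k * ((k:ℝ)+1) := by ring
        _ ≤ (k:ℝ)^k * 3 * ((k:ℝ)+1) := by
            apply mul_le_mul_of_nonneg_right key (by positivity)
        _ ≤ 3^k * (k.factorial:ℝ) * 3 * ((k:ℝ)+1) := by
            have := mul_le_mul_of_nonneg_right ih (show (0:ℝ) ≤ 3 by norm_num)
            apply mul_le_mul_of_nonneg_right _ (by positivity)
            exact this
        _ = 3^(k+1) * ((k+1).factorial : ℝ) := by rw [hfact]; ring

lemma range_prod_fact (k i : ℕ) (hik : i ≤ k) :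
    ∏ n ∈ range (k+1), (if n = i then 1 else ((i:ℤ) - (n:ℤ)).natAbs)
      = i.factorial * (k - i).factorial := by
  have h0i : 0 ≤ i := Nat.zero_le i
  have hik1 : i ≤ k + 1 := hik.trans (Nat.le_succ k)
  rw [range_eq_Ico, ← Finset.prod_Ico_consecutive _ h0i hik1]
  have h1 : ∏ n ∈ Ico 0 i, (if n = i then 1 else ((i:ℤ) - (n:ℤ)).natAbs) = i.factorial := by
    rw [← range_eq_Ico]
    have : ∀ n ∈ range i, (if n = i then 1 else ((i:ℤ) - (n:ℤ)).natAbs) = i - n := by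
      intro n hn
      have hni : n < i := Finset.mem_range.mp hn
      rw [if_neg hni.ne]
      omega
    rw [Finset.prod_congr rfl this, ← Finset.prod_range_reflect (fun n => i - n) i]
    have : ∀ j ∈ range i, i - (i - 1 - j) = j + 1 := by intro j hj; have := Finset.mem_range.mp hj; omega
    rw [Finset.prod_congr rfl this, Finset.prod_range_add_one_eq_factorial]
  have h2 : ∏ n ∈ Ico i (k+1), (if n = i then 1 else ((i:ℤ) - (n:ℤ)).natAbs)
      = (k - i).factorial := by
    rw [Finset.prod_eq_prod_Ico_succ_bot (Nat.lt_succ_of_le hik), if_pos rfl, one_mul,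
      Finset.prod_Ico_eq_prod_range]
    have : ∀ j ∈ range (k + 1 - (i+1)), (if i + 1 + j = i then 1 else ((i:ℤ) - ((i+1+j:ℕ):ℤ)).natAbs) = j + 1 := by
      intro j hj
      rw [if_neg (by omega)]
      push_cast
      omega
    rw [Finset.prod_congr rfl this, Finset.prod_range_add_one_eq_factorial]
    congr 1
    omega
  rw [h1, h2]

lemma fin_prod_fact (k : ℕ) (i : Fin (k+1)) :
    ∏ j ∈ Finset.univ.erase i, ((i:ℤ) - (j:ℤ)).natAbs = (i:ℕ).factorial * (k - (i:ℕ)).factorial := by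
  classical
  set f : Fin (k+1) → ℕ := fun j => if (j:ℕ) = (i:ℕ) then 1 else (((i:ℕ):ℤ) - ((j:ℕ):ℤ)).natAbs with hf
  have h1 : ∏ j ∈ Finset.univ.erase i, ((i:ℤ) - (j:ℤ)).natAbs
      = ∏ j : Fin (k+1), f j := by
    rw [(Finset.prod_erase_mul Finset.univ f (Finset.mem_univ i)).symm, hf]
    simp only [eq_self_iff_true, if_true, mul_one]
    refine Finset.prod_congr rfl fun j hj => ?_
    rw [if_neg (fun h => (Finset.mem_erase.mp hj).1 (Fin.ext h))]
  rw [h1,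
    Fin.prod_univ_eq_prod_range (fun n => if n = (i:ℕ) then 1 else (((i:ℕ):ℤ) - ((n:ℕ):ℤ)).natAbs)]
  exact range_prod_fact k i (Nat.lt_succ_iff.mp i.isLt)


lemma lead_formula (k : ℕ) (v : Fin (k+1) → ℝ) (hv : Function.Injective v)
    (q : ℝ[X]) (hq : q.degree = k) :
    q.leadingCoeff = ∑ i, q.eval (v i) * ∏ j ∈ Finset.univ.erase i, (v i - v j)⁻¹ := by
  have hinj : Set.InjOn v (Finset.univ : Finset (Fin (k+1))) := hv.injOn
  have hcard : (#(Finset.univ : Finset (Fin (k+1))) : WithBot ℕ) = (k+1 : ℕ) := by simp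
  have hdlt : q.degree < #(Finset.univ : Finset (Fin (k+1))) := by
    rw [hcard, hq]; exact_mod_cast Nat.lt_succ_self k
  have heq := Lagrange.eq_interpolate hinj hdlt
  have hnd : q.natDegree = k := natDegree_eq_of_degree_eq_some hq
  have : q.leadingCoeff = q.coeff k := by rw [Polynomial.leadingCoeff, hnd]
  rw [this]
  conv_lhs => rw [heq]
  rw [Lagrange.interpolate_apply, Polynomial.finset_sum_coeff]
  refine Finset.sum_congr rfl fun i _ => ?_
  rw [Polynomial.coeff_C_mul]
  congr 1
  -- coeff k of basis = leadingCoeff of basis = product of inverses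
  have hmem : i ∈ (Finset.univ : Finset (Fin (k+1))) := Finset.mem_univ i
  have hbd : (Lagrange.basis Finset.univ v i).natDegree = k := by
    rw [Lagrange.natDegree_basis hinj hmem]; simp
  have : (Lagrange.basis Finset.univ v i).coeff k = (Lagrange.basis Finset.univ v i).leadingCoeff := by
    rw [Polynomial.leadingCoeff, hbd]
  rw [this, Lagrange.basis, Polynomial.leadingCoeff_prod]
  refine Finset.prod_congr rfl fun j hj => ?_
  have hne : v i ≠ v j := fun h => (Finset.mem_erase.mp hj).1.symm (hv h)
  rw [Lagrange.basisDivisor, Polynomial.leadingCoeff_mul, Polynomial.leadingCoeff_C,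
    Polynomial.leadingCoeff_X_sub_C, mul_one]

lemma coeff_bound (k : ℕ) (d C : ℝ) (hd : 0 < d) (v : Fin (k+1) → ℝ)
    (hgap : ∀ i j : Fin (k+1), (i:ℕ) < (j:ℕ) → ((j:ℕ) - (i:ℕ) : ℝ) * d ≤ v j - v i)
    (q : ℝ[X]) (hq : q.degree = k) (hC : ∀ i, |q.eval (v i)| ≤ C) :
    |q.leadingCoeff| * (d^k * (k.factorial : ℝ)) ≤ C * 2^k := by
  classical
  have hC0 : 0 ≤ C := le_trans (abs_nonneg _) (hC 0)
  -- gaps in abs form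
  have habs : ∀ i j : Fin (k+1), i ≠ j →
      ((((i:ℤ) - (j:ℤ)).natAbs : ℝ)) * d ≤ |v i - v j| := by
    intro i j hij
    rcases lt_or_gt_of_ne (fun h : (i:ℕ) = (j:ℕ) => hij (Fin.ext h)) with h | h
    · have := hgap i j h
      have h1 : (1:ℝ) ≤ ((j:ℕ):ℝ) - ((i:ℕ):ℝ) := by
        have : (i:ℕ) + 1 ≤ (j:ℕ) := h
        have := (Nat.cast_le (α := ℝ)).mpr this
        push_cast at this ⊢; linarith
      have habs2 : |v i - v j| = v j - v i := by
        rw [abs_sub_comm]; exact abs_of_nonneg (by nlinarith)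
      rw [habs2]
      calc ((((i:ℤ) - (j:ℤ)).natAbs : ℝ)) * d = (((j:ℕ) : ℝ) - ((i:ℕ):ℝ)) * d := by
              congr 1
              have : ((i:ℤ) - (j:ℤ)).natAbs = (j:ℕ) - (i:ℕ) := by omega
              rw [this]; push_cast [Nat.cast_sub h.le]; ring
        _ ≤ v j - v i := this
    · have := hgap j i h
      have h1 : (1:ℝ) ≤ ((i:ℕ):ℝ) - ((j:ℕ):ℝ) := by
        have : (j:ℕ) + 1 ≤ (i:ℕ) := h
        have := (Nat.cast_le (α := ℝ)).mpr this
        push_cast at this ⊢; linarith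
      have habs2 : |v i - v j| = v i - v j := by
        exact abs_of_nonneg (by nlinarith)
      rw [habs2]
      calc ((((i:ℤ) - (j:ℤ)).natAbs : ℝ)) * d = (((i:ℕ) : ℝ) - ((j:ℕ):ℝ)) * d := by
              congr 1
              have : ((i:ℤ) - (j:ℤ)).natAbs = (i:ℕ) - (j:ℕ) := by omega
              rw [this]; push_cast [Nat.cast_sub h.le]; ring
        _ ≤ v i - v j := this
  have hinj : Function.Injective v := by
    intro i j hvij
    by_contra hij
    have := habs i j hij
    rw [hvij, sub_self, abs_zero] at this
    have hpos : (0:ℝ) < ((((i:ℤ) - (j:ℤ)).natAbs : ℝ)) * d := by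
      apply mul_pos _ hd
      have : ((i:ℤ) - (j:ℤ)).natAbs ≠ 0 := by
        simp only [ne_eq, Int.natAbs_eq_zero, sub_eq_zero]
        exact_mod_cast fun h => hij (Fin.ext (by exact_mod_cast h))
      exact_mod_cast Nat.pos_of_ne_zero this
    linarith
  -- lower bound on products
  have hprod : ∀ i : Fin (k+1),
      d^k * (((i:ℕ).factorial * (k - (i:ℕ)).factorial : ℕ) : ℝ) ≤ ∏ j ∈ Finset.univ.erase i, |v i - v j| := by
    intro i
    have hcard : (Finset.univ.erase i).card = k := by
      rw [Finset.card_erase_of_mem (Finset.mem_univ i)]; simp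
    calc d^k * (((i:ℕ).factorial * (k - (i:ℕ)).factorial : ℕ) : ℝ)
        = ∏ j ∈ Finset.univ.erase i, ((((i:ℤ) - (j:ℤ)).natAbs : ℝ) * d) := by
          rw [Finset.prod_mul_distrib, Finset.prod_const, hcard, ← Nat.cast_prod,
            fin_prod_fact k i, mul_comm]
      _ ≤ ∏ j ∈ Finset.univ.erase i, |v i - v j| := by
          apply Finset.prod_le_prod
          · intro j _; positivity
          · intro j hj; exact habs i j (Finset.mem_erase.mp hj).1.symm
  -- sum of reciprocals
  have hsum : ∑ i : Fin (k+1), (((i:ℕ).factorial * (k - (i:ℕ)).factorial : ℕ) : ℝ)⁻¹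
      = 2^k / (k.factorial : ℝ) := by
    have : ∀ i : Fin (k+1), (((i:ℕ).factorial * (k - (i:ℕ)).factorial : ℕ) : ℝ)⁻¹
        = (k.choose i : ℝ) / (k.factorial : ℝ) := by
      intro i
      have hik : (i:ℕ) ≤ k := Nat.lt_succ_iff.mp i.isLt
      have := Nat.choose_mul_factorial_mul_factorial hik
      field_simp
      exact_mod_cast (by rw [← this]; ring :
        k.factorial = ((i:ℕ).factorial * (k-(i:ℕ)).factorial) * k.choose i)
    rw [Finset.sum_congr rfl (fun i _ => this i), ← Finset.sum_div]
    congr 1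
    norm_cast
    rw [Fin.sum_univ_eq_sum_range (fun i => k.choose i)]
    exact Nat.sum_range_choose k
  -- main estimate
  have hmain : |q.leadingCoeff| ≤ C * (2^k / (k.factorial : ℝ)) / d^k := by
    rw [lead_formula k v hinj q hq]
    calc |∑ i, q.eval (v i) * ∏ j ∈ Finset.univ.erase i, (v i - v j)⁻¹|
        ≤ ∑ i, |q.eval (v i) * ∏ j ∈ Finset.univ.erase i, (v i - v j)⁻¹| :=
          Finset.abs_sum_le_sum_abs _ _
      _ ≤ ∑ i : Fin (k+1), C * (d^k * (((i:ℕ).factorial * (k - (i:ℕ)).factorial : ℕ) : ℝ))⁻¹ := by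
          apply Finset.sum_le_sum
          intro i _
          rw [abs_mul]
          have h1 : |∏ j ∈ Finset.univ.erase i, (v i - v j)⁻¹|
              = (∏ j ∈ Finset.univ.erase i, |v i - v j|)⁻¹ := by
            rw [Finset.abs_prod, ← Finset.prod_inv_distrib]
            exact Finset.prod_congr rfl (fun j _ => abs_inv _)
          rw [h1]
          have hposf : (0:ℝ) < d^k * (((i:ℕ).factorial * (k - (i:ℕ)).factorial : ℕ) : ℝ) := by
            apply mul_pos (pow_pos hd k)
            exact_mod_cast Nat.pos_of_ne_zero (by positivity)
          apply mul_le_mul (hC i) _ (by positivity) hC0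
          exact inv_anti₀ hposf (hprod i)
      _ = C * (2^k / (k.factorial : ℝ)) / d^k := by
          simp_rw [mul_inv]
          rw [← Finset.mul_sum, ← Finset.mul_sum, hsum]
          have hdk0 : (d:ℝ)^k ≠ 0 := by positivity
          field_simp
  have hdk : (0:ℝ) < d^k * (k.factorial : ℝ) := by positivity
  have hfin : C * (2^k / (k.factorial:ℝ)) / d^k * (d^k * (k.factorial:ℝ)) = C * 2^k := by
    have hdk0 : (d:ℝ)^k ≠ 0 := by positivity
    have hf0 : (k.factorial:ℝ) ≠ 0 := by positivity
    field_simp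
  calc |q.leadingCoeff| * (d^k * (k.factorial:ℝ))
      ≤ (C * (2^k / (k.factorial : ℝ)) / d^k) * (d^k * (k.factorial:ℝ)) :=
        mul_le_mul_of_nonneg_right hmain hdk.le
    _ = C * 2^k := hfin


lemma exists_spread_points (E : Set ℝ) (hE : MeasurableSet E) (R : ℝ)
    (hER : E ⊆ Set.Icc (-R) R) (m : ℝ) (hm0 : 0 < m)
    (hmE : volume E = ENNReal.ofReal m) (k : ℕ) (hk : 1 ≤ k) :
    ∃ x : Fin (k+1) → ℝ, (∀ i, x i ∈ E) ∧
      ∀ i j : Fin (k+1), (i:ℕ) < (j:ℕ) →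
        (((j:ℕ):ℝ) - ((i:ℕ):ℝ)) * ((m - m/(2*(k:ℝ)*((k:ℝ)+1)))/(k:ℝ) - m/(2*(k:ℝ)*((k:ℝ)+1)))
          ≤ x j - x i := by
  classical
  set K : ℝ := (k:ℝ) with hK
  have hK1 : (1:ℝ) ≤ K := by rw [hK]; exact_mod_cast hk
  have hK0 : (0:ℝ) < K := by linarith
  set c : ℝ := m/(2*K*(K+1)) with hc
  have hc0 : 0 < c := by apply div_pos hm0; nlinarith
  set b : ℝ := (m - c)/K with hb
  have hbc : b = (2*(K+1) - 1/K) * c := by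
    rw [hb, hc]; field_simp
  have hb3c : 3*c ≤ b := by
    rw [hbc]
    have h1 : 1/K ≤ 1 := by rw [div_le_one hK0]; exact hK1
    nlinarith
  have hb0 : 0 < b := by linarith
  -- the CDF
  set F : ℝ → ℝ := fun t => (volume (E ∩ Set.Iic t)).toReal with hF
  have hfin : ∀ t, volume (E ∩ Set.Iic t) ≠ ⊤ := by
    intro t
    have : volume (E ∩ Set.Iic t) ≤ volume E := measure_mono Set.inter_subset_left
    rw [hmE] at this
    exact ne_top_of_le_ne_top ENNReal.ofReal_ne_top this
  have hmono : ∀ {s t : ℝ}, s ≤ t → F s ≤ F t := by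
    intro s t hst
    exact ENNReal.toReal_mono (hfin t)
      (measure_mono (Set.inter_subset_inter_right _ (Set.Iic_subset_Iic.mpr hst)))
  have hdiff : ∀ s t : ℝ, s ≤ t → F t - F s = (volume (E ∩ Set.Ioc s t)).toReal := by
    intro s t hst
    have hdec : E ∩ Set.Iic t = (E ∩ Set.Iic s) ∪ (E ∩ Set.Ioc s t) := by
      rw [← Set.inter_union_distrib_left]
      congr 1
      rw [Set.Iic_union_Ioc_eq_Iic hst]
    have hdisj : Disjoint (E ∩ Set.Iic s) (E ∩ Set.Ioc s t) := by
      apply Set.disjoint_of_subset Set.inter_subset_right Set.inter_subset_right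
      rw [Set.disjoint_left]
      intro a ha ha2
      exact absurd ha2.1 (not_lt.mpr ha)
    have := measure_union (μ := volume) hdisj (hE.inter measurableSet_Ioc)
    rw [← hdec] at this
    rw [hF]
    simp only
    have hB : volume (E ∩ Set.Ioc s t) ≠ ⊤ := by
      intro h
      apply hfin t
      rw [hdec, eq_top_iff]
      exact le_trans (by rw [h]) (measure_mono Set.subset_union_right)
    rw [this, ENNReal.toReal_add (hfin s) hB]
    ring
  have hlip : ∀ s t : ℝ, s ≤ t → F t - F s ≤ t - s := by
    intro s t hst
    rw [hdiff s t hst]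
    have h1 : volume (E ∩ Set.Ioc s t) ≤ ENNReal.ofReal (t - s) := by
      calc volume (E ∩ Set.Ioc s t) ≤ volume (Set.Ioc s t) := measure_mono Set.inter_subset_right
        _ = ENNReal.ofReal (t - s) := Real.volume_Ioc
    calc (volume (E ∩ Set.Ioc s t)).toReal ≤ (ENNReal.ofReal (t-s)).toReal :=
          ENNReal.toReal_mono ENNReal.ofReal_ne_top h1
      _ = t - s := ENNReal.toReal_ofReal (by linarith)
  have hcont : Continuous F := by
    apply LipschitzWith.continuous (K := 1)
    apply LipschitzWith.of_dist_le_mul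
    intro s t
    rw [Real.dist_eq, Real.dist_eq, NNReal.coe_one, one_mul]
    rcases le_total s t with h | h
    · rw [abs_sub_comm, abs_of_nonneg (by linarith [hmono h]), abs_of_nonpos (by linarith)]
      linarith [hlip s t h]
    · rw [abs_of_nonneg (by linarith [hmono h]), abs_of_nonneg (by linarith)]
      exact hlip t s h
  -- endpoints
  have hRR : -R ≤ R := by
    obtain ⟨x, hx⟩ : E.Nonempty := by
      rw [Set.nonempty_iff_ne_empty]
      intro h
      rw [h, measure_empty] at hmE
      exact absurd hmE.symm (by simp [ENNReal.ofReal_eq_zero, not_le, hm0])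
    have := hER hx
    linarith [this.1, this.2]
  have hF0 : F (-R) = 0 := by
    have : E ∩ Set.Iic (-R) ⊆ {-R} := by
      intro x hx
      have h1 := (hER hx.1).1
      have h2 := hx.2
      simp only [Set.mem_Iic] at h2
      simp only [Set.mem_singleton_iff]
      linarith
    have := measure_mono_null this Real.volume_singleton
    rw [hF]; simp only [this, ENNReal.toReal_zero]
  have hFR : F R = m := by
    have : E ∩ Set.Iic R = E := by
      apply Set.inter_eq_self_of_subset_left
      intro x hx; exact (hER hx).2
    rw [hF]; simp only [this, hmE, ENNReal.toReal_ofReal hm0.le]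
  -- IVT attainment
  have hIVT : ∀ y ∈ Set.Icc (0:ℝ) m, ∃ t, F t = y := by
    intro y hy
    have := intermediate_value_Icc hRR hcont.continuousOn (a := -R) (b := R)
    rw [hF0, hFR] at this
    obtain ⟨t, _, ht⟩ := this hy
    exact ⟨t, ht⟩
  -- choose points
  have key : ∀ i : Fin (k+1), ∃ x ∈ E, (i:ℝ)*b + c/3 ≤ F x ∧ F x ≤ (i:ℝ)*b + 2*c/3 := by
    intro i
    have hik : ((i:ℕ):ℝ) ≤ K := by
      rw [hK]; exact_mod_cast Nat.lt_succ_iff.mp i.isLt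
    have hi0 : (0:ℝ) ≤ ((i:ℕ):ℝ) := Nat.cast_nonneg _
    have hibm : ((i:ℕ):ℝ)*b + 2*c/3 ≤ m := by
      have : ((i:ℕ):ℝ)*b ≤ K*b := by nlinarith
      have hkb : K*b = m - c := by rw [hb]; field_simp
      nlinarith
    obtain ⟨a₁, ha₁⟩ := hIVT (((i:ℕ):ℝ)*b + c/3) ⟨by positivity, by nlinarith⟩
    obtain ⟨b₁, hb₁⟩ := hIVT (((i:ℕ):ℝ)*b + 2*c/3) ⟨by positivity, hibm⟩
    have hab : a₁ ≤ b₁ := by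
      by_contra h
      push_neg at h
      have := hmono h.le
      rw [ha₁, hb₁] at this
      linarith
    have hpos : volume (E ∩ Set.Ioc a₁ b₁) ≠ 0 := by
      intro h0
      have := hdiff a₁ b₁ hab
      rw [ha₁, hb₁, h0, ENNReal.toReal_zero] at this
      linarith
    obtain ⟨x, hx⟩ : (E ∩ Set.Ioc a₁ b₁).Nonempty := by
      rw [Set.nonempty_iff_ne_empty]
      intro h
      rw [h, measure_empty] at hpos
      exact hpos rfl
    refine ⟨x, hx.1, ?_, ?_⟩
    · rw [← ha₁]; exact hmono hx.2.1.le
    · rw [← hb₁]; exact hmono hx.2.2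
  choose x hxE hxl hxu using key
  refine ⟨x, hxE, ?_⟩
  intro i j hij
  have hxij : x i ≤ x j := by
    by_contra h
    push_neg at h
    have := hmono h.le
    have h1 := hxl j
    have h2 := hxu i
    have hji : ((i:ℕ):ℝ) + 1 ≤ ((j:ℕ):ℝ) := by exact_mod_cast hij
    nlinarith
  have h1 := hlip (x i) (x j) hxij
  have h2 := hxl j
  have h3 := hxu i
  have hji : ((i:ℕ):ℝ) + 1 ≤ ((j:ℕ):ℝ) := by exact_mod_cast hij
  have hd : (m - m/(2*K*(K+1)))/K - m/(2*K*(K+1)) = b - c := by rw [hb, hc]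
  rw [hd]
  nlinarith

set_option maxHeartbeats 1000000 in
theorem stmt_15 (lam : ℝ) (hlam : 0 < lam) (p : ℕ → Polynomial ℝ)
    (hdeg : ∀ k : ℕ, 1 ≤ k → (p k).degree = k)
    (hlead : ∀ k : ℕ, 1 ≤ k → lam ^ k ≤ |(p k).leadingCoeff|) :
    volume {τ : ℝ | ∃ C : ℝ, ∀ k : ℕ, 1 ≤ k → |(p k).eval τ| ≤ C} < ⊤ ∧
    volume {τ : ℝ | ∃ C : ℝ, ∀ k : ℕ, 1 ≤ k → |(p k).eval τ| ≤ C} ≤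
      ENNReal.ofReal (8 / lam) := by
  classical
  set S := {τ : ℝ | ∃ C : ℝ, ∀ k : ℕ, 1 ≤ k → |(p k).eval τ| ≤ C} with hS
  set T : ℕ → Set ℝ := fun n => {τ : ℝ | ∀ k : ℕ, 1 ≤ k → |(p k).eval τ| ≤ n} with hT
  have hTmeas : ∀ n, MeasurableSet (T n) := by
    intro n
    have : T n = ⋂ k : ℕ, {τ : ℝ | 1 ≤ k → |(p k).eval τ| ≤ n} := by
      ext τ; simp [hT, Set.mem_iInter]
    rw [this]
    apply MeasurableSet.iInter
    intro k
    by_cases hk : 1 ≤ k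
    · have : {τ : ℝ | 1 ≤ k → |(p k).eval τ| ≤ n} = {τ : ℝ | |(p k).eval τ| ≤ n} := by
        ext τ; simp [hk]
      rw [this]
      exact measurableSet_le ((p k).continuous.abs.measurable) measurable_const
    · have : {τ : ℝ | 1 ≤ k → |(p k).eval τ| ≤ n} = Set.univ := by
        ext τ; simp [hk]
      rw [this]; exact MeasurableSet.univ
  -- the key bound on truncated pieces
  have hTbound : ∀ (n : ℕ) (R : ℕ), volume (T n ∩ Set.Icc (-(R:ℝ)) R) ≤ ENNReal.ofReal (8/lam) := by
    intro n R
    set E := T n ∩ Set.Icc (-(R:ℝ)) R with hE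
    have hEmeas : MeasurableSet E := (hTmeas n).inter measurableSet_Icc
    have hfinE : volume E ≠ ⊤ := by
      have : volume E ≤ volume (Set.Icc (-(R:ℝ)) R) := measure_mono Set.inter_subset_right
      rw [Real.volume_Icc] at this
      exact ne_top_of_le_ne_top ENNReal.ofReal_ne_top this
    set m := (volume E).toReal with hm
    have hmE : volume E = ENNReal.ofReal m := (ENNReal.ofReal_toReal hfinE).symm
    by_contra hcon
    push_neg at hcon
    have h8m : 8/lam < m := by
      by_contra h
      push_neg at h
      exact absurd (hmE ▸ ENNReal.ofReal_le_ofReal h) (not_le.mpr hcon)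
    have hm0 : 0 < m := lt_trans (by positivity) h8m
    -- choose k
    obtain ⟨k₀, hk₀⟩ := pow_unbounded_of_one_lt (2*((n:ℝ)+1)) (show (1:ℝ) < 4/3 by norm_num)
    set k := k₀ + 1 with hkdef
    have hk1 : 1 ≤ k := Nat.le_add_left 1 k₀
    have hkC : 2*((n:ℝ)+1) ≤ (4/3:ℝ)^k := by
      calc 2*((n:ℝ)+1) ≤ (4/3:ℝ)^k₀ := hk₀.le
        _ ≤ (4/3:ℝ)^k := pow_le_pow_right₀ (by norm_num) (Nat.le_succ k₀)
    set K : ℝ := (k:ℝ) with hKdef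
    have hK1 : (1:ℝ) ≤ K := by rw [hKdef]; exact_mod_cast hk1
    have hK0 : (0:ℝ) < K := by linarith
    -- get spread points
    obtain ⟨x, hxE, hgap⟩ := exists_spread_points E hEmeas (R:ℝ)
      (by rw [hE]; exact Set.inter_subset_right) m hm0 hmE k hk1
    set d : ℝ := (m - m/(2*K*(K+1)))/K - m/(2*K*(K+1)) with hd
    have hd_eq : d = m/K * (1 - 1/(2*K)) := by rw [hd]; field_simp; ring
    have hd0 : 0 < d := by
      rw [hd_eq]
      apply mul_pos (by positivity)
      have : 1/(2*K) ≤ 1/2 := by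
        apply div_le_div_of_nonneg_left (by norm_num) (by norm_num) (by linarith)
      linarith
    -- apply coefficient bound
    have hCb := coeff_bound k d (n:ℝ) hd0 x (by
        intro i j hij
        exact hgap i j hij)
      (p k) (hdeg k hk1) (by
        intro i
        have := (hxE i).1
        rw [hT] at this
        exact this k hk1)
    -- chain of inequalities to contradiction
    have hlk := hlead k hk1
    have hfpos : (0:ℝ) < (k.factorial : ℝ) := by exact_mod_cast k.factorial_pos
    have h1 : lam^k * (d^k * (k.factorial:ℝ)) ≤ (n:ℝ) * 2^k := by
      calc lam^k * (d^k * (k.factorial:ℝ))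
          ≤ |(p k).leadingCoeff| * (d^k * (k.factorial:ℝ)) := by
            apply mul_le_mul_of_nonneg_right hlk (by positivity)
        _ ≤ (n:ℝ) * 2^k := hCb
    -- Bernoulli
    have hbern : (1/2:ℝ) ≤ (1 - 1/(2*K))^k := by
      have h2K : 1/(2*K) ≤ 1/2 := by
        apply div_le_div_of_nonneg_left (by norm_num) (by norm_num) (by linarith)
      have := one_add_mul_le_pow (a := -(1/(2*K))) (by linarith) k
      have heq : (1:ℝ) + (k:ℝ) * (-(1/(2*K))) = 1/2 := by
        rw [hKdef]
        have hk0 : ((k:ℕ):ℝ) ≠ 0 := by rw [← hKdef]; linarith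
        field_simp
        ring
      rw [heq] at this
      calc (1/2:ℝ) ≤ (1 + -(1/(2*K)))^k := this
        _ = (1 - 1/(2*K))^k := by ring_nf
    have hld : 8/K * (1 - 1/(2*K)) ≤ lam * d := by
      rw [hd_eq]
      have hfac : (0:ℝ) < (1 - 1/(2*K)) := by
        have : 1/(2*K) ≤ 1/2 := by
          apply div_le_div_of_nonneg_left (by norm_num) (by norm_num) (by linarith)
        linarith
      have h8 : 8 ≤ lam * m := by
        rw [div_lt_iff₀ hlam] at h8m
        linarith
      calc 8/K * (1 - 1/(2*K)) ≤ (lam*m)/K * (1 - 1/(2*K)) := by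
            apply mul_le_mul_of_nonneg_right _ hfac.le
            exact (div_le_div_iff_of_pos_right hK0).mpr h8
        _ = lam * (m/K * (1 - 1/(2*K))) := by ring
    -- final contradiction
    have hfac0 : (0:ℝ) < (1 - 1/(2*K)) := by
      have : 1/(2*K) ≤ 1/2 := by
        apply div_le_div_of_nonneg_left (by norm_num) (by norm_num) (by linarith)
      linarith
    have he0 : (0:ℝ) < 8/K * (1 - 1/(2*K)) := by positivity
    have h2 : (8/K * (1 - 1/(2*K)))^k ≤ (lam*d)^k := pow_le_pow_left₀ he0.le hld k
    have h3 : (lam*d)^k = lam^k * d^k := mul_pow _ _ _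
    have h4 : (8/K * (1 - 1/(2*K)))^k = (8/K)^k * ((1 - 1/(2*K)))^k := mul_pow _ _ _
    have h5 : (8/K)^k * (1/2) ≤ (8/K)^k * ((1 - 1/(2*K)))^k :=
      mul_le_mul_of_nonneg_left hbern (by positivity)
    have h6 : (8/K)^k * (1/2) * (k.factorial:ℝ) ≤ (n:ℝ) * 2^k := by
      calc (8/K)^k * (1/2) * (k.factorial:ℝ)
          ≤ lam^k * d^k * (k.factorial:ℝ) := by
            apply mul_le_mul_of_nonneg_right _ hfpos.le
            rw [← h3]
            exact le_trans (le_trans h5 h4.symm.le) h2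
        _ = lam^k * (d^k * (k.factorial:ℝ)) := by ring
        _ ≤ (n:ℝ) * 2^k := h1
    have hA0 : (0:ℝ) < K^k := pow_pos hK0 k
    have hX : 8^k * (k.factorial:ℝ) ≤ 2*(n:ℝ)*2^k*K^k := by
      rw [div_pow] at h6
      rw [div_mul_eq_mul_div, div_mul_eq_mul_div, div_le_iff₀ hA0] at h6
      nlinarith [h6]
    have hY : 2*((n:ℝ)+1)*K^k ≤ 4^k * (k.factorial:ℝ) := by
      have hp := pow_self_le_three_pow_factorial k
      calc 2*((n:ℝ)+1)*K^k ≤ (4/3:ℝ)^k * (3^k * (k.factorial:ℝ)) := by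
            apply mul_le_mul hkC _ (by positivity) (by positivity)
            rw [hKdef]; exact hp
        _ = 4^k * (k.factorial:ℝ) := by
            rw [← mul_assoc, ← mul_pow]; norm_num
    have h8k : (8:ℝ)^k = 2^k*4^k := by rw [← mul_pow]; norm_num
    have hZ : 2^k * (2*((n:ℝ)+1)*K^k) ≤ 2^k * (2*(n:ℝ)*K^k) := by
      calc 2^k * (2*((n:ℝ)+1)*K^k) ≤ 2^k * (4^k * (k.factorial:ℝ)) :=
            mul_le_mul_of_nonneg_left hY (by positivity)
        _ = 8^k * (k.factorial:ℝ) := by rw [h8k]; ring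
        _ ≤ 2*(n:ℝ)*2^k*K^k := hX
        _ = 2^k * (2*(n:ℝ)*K^k) := by ring
    have hcontr := le_of_mul_le_mul_left hZ (show (0:ℝ) < 2^k by positivity)
    clear_value K d m
    nlinarith [hA0, hcontr]
  -- now bound each T n
  have hTn : ∀ n : ℕ, volume (T n) ≤ ENNReal.ofReal (8/lam) := by
    intro n
    have hunion : T n = ⋃ R : ℕ, (T n ∩ Set.Icc (-(R:ℝ)) R) := by
      ext τ
      constructor
      · intro hτ
        obtain ⟨R, hR⟩ := exists_nat_ge |τ|
        exact Set.mem_iUnion.mpr ⟨R, hτ, abs_le.mp hR⟩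
      · intro hτ
        obtain ⟨R, hR⟩ := Set.mem_iUnion.mp hτ
        exact hR.1
    have hdir : Directed (· ⊆ ·) (fun R : ℕ => T n ∩ Set.Icc (-(R:ℝ)) R) := by
      apply Monotone.directed_le
      intro R R' hRR'
      apply Set.inter_subset_inter_right
      apply Set.Icc_subset_Icc
      · simp only [neg_le_neg_iff]; exact_mod_cast hRR'
      · exact_mod_cast hRR'
    rw [hunion, hdir.measure_iUnion]
    exact iSup_le fun R => hTbound n R
  -- decompose S
  have hSU : S = ⋃ n : ℕ, T n := by
    ext τ
    constructor
    · rintro ⟨C, hC⟩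
      refine Set.mem_iUnion.mpr ⟨⌈C⌉₊, fun k hk => le_trans (hC k hk) (Nat.le_ceil C)⟩
    · intro hτ
      obtain ⟨n, hn⟩ := Set.mem_iUnion.mp hτ
      exact ⟨n, hn⟩
  have hdirT : Directed (· ⊆ ·) T := by
    apply Monotone.directed_le
    intro a b hab τ hτ k hk
    calc |(p k).eval τ| ≤ (a:ℝ) := hτ k hk
      _ ≤ (b:ℝ) := by exact_mod_cast hab
  have hfinal : volume S ≤ ENNReal.ofReal (8/lam) := by
    rw [hSU, hdirT.measure_iUnion]
    exact iSup_le hTn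
  exact ⟨lt_of_le_of_lt hfinal ENNReal.ofReal_lt_top, hfinal⟩
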